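/- Let M be a von Neumann algebra acting on a complex Hilbert space H containing the identity operator I, let σ : M → M be a surjective *-linear map and let d : M → M be a *-σ-derivation such that d(I) is central in M (d(I)A = A d(I) for all A ∈ M). Let K := ⋂_{B,C ∈ M} ker(σ(BC) − σ(B)σ(C)) and let L := K^⊥. Assume that the image d(I)(L) is dense in L. Then σ(I)ℓ = (1/2)ℓ for every ℓ ∈ L. -/

import Mathlib

set_option maxHeartbeats 1000000


/-- Let `σ : M → M` be a surjective `*`-linear map on a von Neumann
algebra, `d` a `*`-`σ`-derivation with `d(I)` central,
`K := ⋂_{B,C} ker(σ(BC) − σ(B)σ(C))` and `L := K^⊥`.  If `d(I)(L)` is dense in `L`,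
then `σ(I)ℓ = (1/2)ℓ` for every `ℓ ∈ L`. -/
theorem sigma_one_is_half_on_L
    {H : Type*} [NormedAddCommGroup H] [InnerProductSpace ℂ H] [CompleteSpace H]
    (M : VonNeumannAlgebra H)
    (σ : M.toStarSubalgebra →ₗ[ℂ] M.toStarSubalgebra)
    (hσstar : ∀ A : M.toStarSubalgebra, σ (star A) = star (σ A))
    (hσsurj : Function.Surjective σ)
    (d : M.toStarSubalgebra →ₗ[ℂ] M.toStarSubalgebra)
    (hdstar : ∀ A : M.toStarSubalgebra, d (star A) = star (d A))
    (hdder : ∀ A B : M.toStarSubalgebra, d (A * B) = d A * σ B + σ A * d B)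
    (hdIcentral : ∀ A : M.toStarSubalgebra, d 1 * A = A * d 1)
    (K : Submodule ℂ H)
    (hK : K = ⨅ (B : M.toStarSubalgebra) (C : M.toStarSubalgebra),
      LinearMap.ker (((σ (B * C) : H →L[ℂ] H) - (σ B : H →L[ℂ] H) * (σ C : H →L[ℂ] H) : H →L[ℂ] H) : H →ₗ[ℂ] H))
    (L : Submodule ℂ H) (hL : L = Kᗮ)
    (hdense : (Submodule.map ((d 1 : H →L[ℂ] H) : H →ₗ[ℂ] H) L).topologicalClosure = L) :
    ∀ ℓ ∈ L, (σ 1 : H →L[ℂ] H) ℓ = (1 / 2 : ℂ) • ℓ := by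
  -- From d(1) = d(1·1) = d(1)σ(1) + σ(1)d(1) and centrality, d 1 = σ 1 * d 1 + σ 1 * d 1.
  have key : d 1 = σ 1 * d 1 + σ 1 * d 1 := by
    have h1 := hdder 1 1
    rw [one_mul] at h1
    rw [hdIcentral (σ 1)] at h1
    exact h1
  -- Hence pointwise on H
  have key2 : ∀ x : H, (d 1 : H →L[ℂ] H) x
      = (σ 1 : H →L[ℂ] H) ((d 1 : H →L[ℂ] H) x) + (σ 1 : H →L[ℂ] H) ((d 1 : H →L[ℂ] H) x) := by
    intro x
    have := congrArg (fun A : M.toStarSubalgebra => (A : H →L[ℂ] H) x) key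
    simpa using this
  -- the operator σ(1) - (1/2)•id kills d(1) x for all x
  set f : H →L[ℂ] H := (σ 1 : H →L[ℂ] H) - (1 / 2 : ℂ) • ContinuousLinearMap.id ℂ H with hf
  have hker : ∀ x : H, f ((d 1 : H →L[ℂ] H) x) = 0 := by
    intro x
    have this := key2 x
    simp only [hf, ContinuousLinearMap.sub_apply, ContinuousLinearMap.smul_apply,
      ContinuousLinearMap.id_apply]
    rw [sub_eq_zero]
    have h2 : (2 : ℂ) • ((σ 1 : H →L[ℂ] H) ((d 1 : H →L[ℂ] H) x)) = (d 1 : H →L[ℂ] H) x := by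
      rw [two_smul]; exact this.symm
    calc (σ 1 : H →L[ℂ] H) ((d 1 : H →L[ℂ] H) x)
        = (1 / 2 : ℂ) • ((2 : ℂ) • ((σ 1 : H →L[ℂ] H) ((d 1 : H →L[ℂ] H) x))) := by
          rw [smul_smul]; norm_num
      _ = (1 / 2 : ℂ) • ((d 1 : H →L[ℂ] H) x) := by rw [h2]
  have hsub : Submodule.map ((d 1 : H →L[ℂ] H) : H →ₗ[ℂ] H) L ≤ LinearMap.ker (f : H →ₗ[ℂ] H) := by
    rintro y ⟨x, -, rfl⟩
    exact hker x
  have hclosed : IsClosed (LinearMap.ker (f : H →ₗ[ℂ] H) : Set H) := ContinuousLinearMap.isClosed_ker f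
  have hLker : L ≤ LinearMap.ker (f : H →ₗ[ℂ] H) := by
    rw [← hdense]
    exact Submodule.topologicalClosure_minimal _ hsub hclosed
  intro ℓ hℓ
  have := hLker hℓ
  rw [LinearMap.mem_ker] at this
  have : f ℓ = 0 := this
  rw [hf] at this
  simpa [sub_eq_zero] using this
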